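/- Let F be a field, let A be an (n−1)×(n−1) symmetric matrix over F, let y ∈ F^{n−1}, let b ∈ F, and let B be the n×n symmetric matrix with block form B = [[A, y], [y^T, b]]. Then rank A ≤ rank B ≤ rank A + 2. Moreover: (i) rank B = rank A + 2 if and only if y is not in the column space of A; and (ii) rank B = rank A + 1 if and only if y is in the column space of A and b ≠ x^T A x for the vector x with y = Ax (this condition being independent of the choice of such x). -/
import Mathlib


open Matrix

/-- The minor of a square matrix `B` lying in the rows indexed by `α` and the columns
indexed by `β` (each listed in increasing order); junk value `0` if `α.card ≠ β.card`. -/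
def qMinor {R : Type*} [CommRing R] {m : Type*} [Fintype m] [LinearOrder m]
    (B : Matrix m m R) (α β : Finset m) : R :=
  if h : β.card = α.card then
    (Matrix.of fun i j : Fin α.card =>
      B (α.orderEmbOfFin rfl i) (β.orderEmbOfFin h j)).det
  else 0

/-- `α` and `β` index a quasi-principal submatrix of order `k`, i.e.
`|α| = |β| = k` and `k - 1 ≤ |α ∩ β| (≤ k)`. -/
def IsQPPair {m : Type*} [DecidableEq m] (k : ℕ) (α β : Finset m) : Prop :=
  α.card = k ∧ β.card = k ∧ k - 1 ≤ (α ∩ β).card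

/-- All quasi-principal minors of `B` of order `k` are nonzero. -/
def QPAllNonzero {R : Type*} [CommRing R] {m : Type*} [Fintype m] [LinearOrder m]
    (B : Matrix m m R) (k : ℕ) : Prop :=
  ∀ α β : Finset m, IsQPPair k α β → qMinor B α β ≠ 0

/-- All quasi-principal minors of `B` of order `k` are zero. -/
def QPAllZero {R : Type*} [CommRing R] {m : Type*} [Fintype m] [LinearOrder m]
    (B : Matrix m m R) (k : ℕ) : Prop :=
  ∀ α β : Finset m, IsQPPair k α β → qMinor B α β = 0

/-- The three possible letters of a qpr-sequence. -/
inductive QPR : Type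
  | A
  | S
  | N
deriving DecidableEq

open Classical in
/-- The letter of the qpr-sequence of `B` corresponding to order `k`:
`A` if all quasi-principal minors of order `k` are nonzero, `N` if all are zero,
and `S` otherwise. -/
noncomputable def qprEntry {R : Type*} [CommRing R] {m : Type*} [Fintype m] [LinearOrder m]
    (B : Matrix m m R) (k : ℕ) : QPR :=
  if QPAllNonzero B k then QPR.A
  else if QPAllZero B k then QPR.N
  else QPR.S

/-- A sequence of letters `q 0, …, q (n-1)` (standing for `q_1 ⋯ q_n`) is attainable
over `F` if it is the qpr-sequence of an `n × n` symmetric matrix over `F`. -/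
def Attainable (F : Type*) [Field F] {n : ℕ} (q : Fin n → QPR) : Prop :=
  ∃ B : Matrix (Fin n) (Fin n) F, B.IsSymm ∧ ∀ k : Fin n, qprEntry B ((k : ℕ) + 1) = q k

/-- The Schur complement `B/B[γ] = B[γᶜ] - B[γᶜ, γ] B[γ]⁻¹ B[γ, γᶜ]`,
with rows and columns indexed by `γᶜ` (indexing inherited from `B`). -/
noncomputable def schurCompl {R : Type*} [CommRing R] {n : ℕ}
    (B : Matrix (Fin n) (Fin n) R) (γ : Finset (Fin n)) :
    Matrix ↥(γᶜ) ↥(γᶜ) R :=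
  B.submatrix (fun i : ↥(γᶜ) => (i : Fin n)) (fun j : ↥(γᶜ) => (j : Fin n)) -
    B.submatrix (fun i : ↥(γᶜ) => (i : Fin n)) (fun j : ↥γ => (j : Fin n)) *
      (B.submatrix (fun i : ↥γ => (i : Fin n)) fun j : ↥γ => (j : Fin n))⁻¹ *
      B.submatrix (fun i : ↥γ => (i : Fin n)) fun j : ↥(γᶜ) => (j : Fin n)

/-- The `(m+1) × (m+1)` matrix with block form `[[A, x], [yᵀ, b]]`. -/
def borderMat {R : Type*} [CommRing R] {m : ℕ} (A : Matrix (Fin m) (Fin m) R)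
    (x y : Fin m → R) (b : R) : Matrix (Fin (m + 1)) (Fin (m + 1)) R :=
  Matrix.of fun i j =>
    if hi : (i : ℕ) < m then
      if hj : (j : ℕ) < m then A ⟨i, hi⟩ ⟨j, hj⟩ else x ⟨i, hi⟩
    else
      if hj : (j : ℕ) < m then y ⟨j, hj⟩ else b

open Submodule Module Classical in
lemma finrank_sup_span_single {F : Type*} [Field F] {V : Type*} [AddCommGroup V] [Module F V]
    [FiniteDimensional F V] (U : Submodule F V) (w : V) :
    finrank F ↥(U ⊔ span F {w}) = finrank F ↥U + (if w ∈ U then 0 else 1) := by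
  by_cases h : w ∈ U
  · rw [if_pos h, sup_eq_left.2 (span_le.2 (Set.singleton_subset_iff.2 h)), add_zero]
  · rw [if_neg h]
    have hw0 : w ≠ 0 := fun h0 => h (h0 ▸ U.zero_mem)
    have hinf : U ⊓ span F {w} = ⊥ := by
      rw [eq_bot_iff]
      rintro z ⟨hzU, hz⟩
      obtain ⟨c, rfl⟩ := mem_span_singleton.1 hz
      rcases eq_or_ne c 0 with rfl | hc
      · simp
      · exact absurd (by simpa [smul_smul, inv_mul_cancel₀ hc] using U.smul_mem c⁻¹ hzU) h
    have h2 := Submodule.finrank_sup_add_finrank_inf_eq U (span F {w})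
    rw [hinf] at h2
    simpa [finrank_span_singleton hw0] using h2

open Submodule in
/-- for symmetric `A` and `B = [[A, y], [yᵀ, b]]` one has
`rank A ≤ rank B ≤ rank A + 2`; moreover (i) `rank B = rank A + 2` iff `y ∉ C(A)`, and
(ii) `rank B = rank A + 1` iff `y ∈ C(A)` and `b ≠ xᵀAx` for the (any) vector `x` with
`y = Ax`. -/
theorem stmt_14 {F : Type*} [Field F] {m : ℕ} (A : Matrix (Fin m) (Fin m) F)
    (hA : A.IsSymm) (y : Fin m → F) (b : F) :
    A.rank ≤ (borderMat A y y b).rank ∧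
    (borderMat A y y b).rank ≤ A.rank + 2 ∧
    ((borderMat A y y b).rank = A.rank + 2 ↔ ¬ ∃ u, A *ᵥ u = y) ∧
    ((borderMat A y y b).rank = A.rank + 1 ↔
      (∃ u, A *ᵥ u = y) ∧ ∀ u, A *ᵥ u = y → b ≠ u ⬝ᵥ A *ᵥ u) := by

  classical
  set P : Matrix (Fin (m+1)) (Fin m) F :=
    Matrix.of (fun i j => if h : (i:ℕ) < m then A ⟨i, h⟩ j else y j) with hP
  set w : Fin (m+1) → F := Fin.snoc y b with hw
  -- P applied to a vector
  have hPapp : ∀ t, P.mulVecLin t = Fin.snoc (A *ᵥ t) (y ⬝ᵥ t) := by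
    intro t; funext i
    refine Fin.lastCases ?_ ?_ i
    · simp [hP, Matrix.mulVecLin_apply, Matrix.mulVec, dotProduct]
    · intro i'
      simp [hP, Matrix.mulVecLin_apply, Matrix.mulVec, dotProduct]
  -- B applied to a vector
  have hB : ∀ v, borderMat A y y b *ᵥ v =
      P.mulVecLin (v ∘ Fin.castSucc) + (v (Fin.last m)) • w := by
    intro v; funext i
    rw [hPapp]
    refine Fin.lastCases ?_ ?_ i
    · simp [borderMat, hw, Matrix.mulVec, dotProduct, Fin.sum_univ_castSucc, mul_comm]
    · intro i'
      simp [borderMat, hw, Matrix.mulVec, dotProduct, Fin.sum_univ_castSucc, mul_comm]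
  have hrange : LinearMap.range (borderMat A y y b).mulVecLin =
      LinearMap.range P.mulVecLin ⊔ span F {w} := by
    apply le_antisymm
    · rintro _ ⟨v, rfl⟩
      rw [Matrix.mulVecLin_apply, hB]
      exact add_mem (mem_sup_left (LinearMap.mem_range_self _ _))
        (mem_sup_right (smul_mem _ _ (mem_span_singleton_self w)))
    · refine sup_le ?_ ?_
      · rintro _ ⟨t, rfl⟩
        refine ⟨Fin.snoc t 0, ?_⟩
        rw [Matrix.mulVecLin_apply, hB]
        simp [Fin.snoc_comp_castSucc]
      · rw [span_le, Set.singleton_subset_iff]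
        refine ⟨Fin.snoc 0 1, ?_⟩
        rw [Matrix.mulVecLin_apply, hB]
        simp [Fin.snoc_comp_castSucc]
  -- transpose of P applied to a vector
  have hPT : ∀ v, Pᵀ *ᵥ v = A *ᵥ (v ∘ Fin.castSucc) + (v (Fin.last m)) • y := by
    intro v; funext i
    have hsym : ∀ i j, A j i = A i j := fun i j => hA.apply i j
    simp [hP, Matrix.mulVecLin_apply, Matrix.mulVec, dotProduct, Matrix.transpose,
      Fin.sum_univ_castSucc, hsym, mul_comm]
  have hrangeT : LinearMap.range Pᵀ.mulVecLin =
      LinearMap.range A.mulVecLin ⊔ span F {y} := by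
    apply le_antisymm
    · rintro _ ⟨v, rfl⟩
      rw [Matrix.mulVecLin_apply, hPT]
      exact add_mem (mem_sup_left ⟨_, rfl⟩)
        (mem_sup_right (smul_mem _ _ (mem_span_singleton_self y)))
    · refine sup_le ?_ ?_
      · rintro _ ⟨t, rfl⟩
        refine ⟨Fin.snoc t 0, ?_⟩
        rw [Matrix.mulVecLin_apply, hPT]
        simp [Fin.snoc_comp_castSucc, Matrix.mulVecLin_apply]
      · rw [span_le, Set.singleton_subset_iff]
        refine ⟨Fin.snoc 0 1, ?_⟩
        rw [Matrix.mulVecLin_apply, hPT]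
        simp [Fin.snoc_comp_castSucc]
  have hymem : (y ∈ LinearMap.range A.mulVecLin) ↔ ∃ u, A *ᵥ u = y := by
    simp [LinearMap.mem_range]
  have hrankP : P.rank = A.rank + (if ∃ u, A *ᵥ u = y then 0 else 1) := by
    rw [← Matrix.rank_transpose]
    simp only [Matrix.rank]
    rw [hrangeT, finrank_sup_span_single]
    congr 1
  have hrankB : (borderMat A y y b).rank =
      P.rank + (if w ∈ LinearMap.range P.mulVecLin then 0 else 1) := by
    simp only [Matrix.rank]
    rw [hrange, finrank_sup_span_single]
  have hwmem : w ∈ LinearMap.range P.mulVecLin ↔ ∃ t, A *ᵥ t = y ∧ y ⬝ᵥ t = b := by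
    constructor
    · rintro ⟨t, ht⟩
      rw [hPapp] at ht
      refine ⟨t, ?_, ?_⟩
      · funext j
        have := congrFun ht (Fin.castSucc j)
        simpa [hw] using this
      · have := congrFun ht (Fin.last m)
        simpa [hw] using this
    · rintro ⟨t, h1, h2⟩
      exact ⟨t, by rw [hPapp, h1, h2, hw]⟩
  by_cases hy : ∃ u, A *ᵥ u = y
  · obtain ⟨u, hu⟩ := hy
    have hdot : ∀ t, A *ᵥ t = y → y ⬝ᵥ t = u ⬝ᵥ A *ᵥ u := by
      intro t ht
      calc y ⬝ᵥ t = t ⬝ᵥ (A *ᵥ u) := by rw [hu, dotProduct_comm]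
        _ = (t ᵥ* A) ⬝ᵥ u := by rw [Matrix.dotProduct_mulVec]
        _ = (A *ᵥ t) ⬝ᵥ u := by rw [← Matrix.mulVec_transpose, hA.eq]
        _ = u ⬝ᵥ A *ᵥ u := by rw [ht, ← hu, dotProduct_comm]
    have hcond : (w ∈ LinearMap.range P.mulVecLin) ↔ b = u ⬝ᵥ A *ᵥ u := by
      rw [hwmem]
      constructor
      · rintro ⟨t, h1, h2⟩
        rw [← h2, hdot t h1]
      · intro hb
        exact ⟨u, hu, by rw [hb]; exact hdot u hu⟩
    have hr : (borderMat A y y b).rank = A.rank + (if b = u ⬝ᵥ A *ᵥ u then 0 else 1) := by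
      rw [hrankB, hrankP, if_pos ⟨u, hu⟩, add_zero]
      congr 1
      simp [hcond]
    refine ⟨?_, ?_, ?_, ?_⟩
    · rw [hr]; split <;> omega
    · rw [hr]; split <;> omega
    · rw [hr]
      constructor
      · intro h; exfalso; split at h <;> omega
      · intro h; exact absurd ⟨u, hu⟩ h
    · rw [hr]
      constructor
      · intro h
        have hb : b ≠ u ⬝ᵥ A *ᵥ u := by
          intro hb; rw [if_pos hb] at h; omega
        refine ⟨⟨u, hu⟩, fun t ht hbt => ?_⟩
        apply hb
        rw [hbt, ← hdot t ht, ht, dotProduct_comm]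
      · rintro ⟨-, hall⟩
        rw [if_neg (hall u hu)]
  · have h1 : w ∉ LinearMap.range P.mulVecLin := by
      rw [hwmem]; rintro ⟨t, ht, -⟩; exact hy ⟨t, ht⟩
    have hr : (borderMat A y y b).rank = A.rank + 2 := by
      rw [hrankB, hrankP, if_neg hy, if_neg h1]
    refine ⟨by omega, by omega, ?_, ?_⟩
    · rw [hr]
      exact ⟨fun _ => hy, fun _ => rfl⟩
    · rw [hr]
      constructor
      · intro h; omega
      · rintro ⟨hex, -⟩; exact absurd hex hy
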